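/- Let E be a row-finite directed graph with no sources. If no cycle of E has an entrance and every pair of vertices has only finitely many cycle-free minimal ancestry pairs, then for any vertices v, w, the set {(x,y) ∈ E^∞ × E^∞ : r(x)=v, r(y)=w, σ^p x = σ^q y for some p,q ∈ ℕ} is a finite union of sets of the form {(λz, μz) : z ∈ E^∞, r(z)=s(λ)} with (λ,μ) ranging over cycle-free minimal ancestry pairs for v,w. -/

import Mathlib

/-- A directed graph: edges `E`, vertices `V`, range and source maps. -/
structure DirGraph where
  V : Type
  E : Type
  r : E → V
  s : E → V

/-- Shift an infinite path (sequence of edges) by `p`. -/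
def shift (p : ℕ) {α : Type} (x : ℕ → α) : ℕ → α := fun i => x (i + p)

namespace DirGraph

variable (G : DirGraph)

/-- `IsPath G v l u` : the list of edges `l` is a finite path with range `v` and
source `u` (edges are composed so that `s eᵢ = r eᵢ₊₁`). -/
inductive IsPath : G.V → List G.E → G.V → Prop
  | nil (v : G.V) : IsPath v [] v
  | cons (e : G.E) {l : List G.E} {u : G.V} :
      IsPath (G.s e) l u → IsPath (G.r e) (e :: l) u

/-- An infinite path: a sequence of edges with `s(xᵢ) = r(xᵢ₊₁)`. -/
def InfPath (x : ℕ → G.E) : Prop := ∀ i, G.s (x i) = G.r (x (i + 1))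

/-- Prepend a finite path (list of edges) to an infinite path. -/
def prepend (l : List G.E) (x : ℕ → G.E) : ℕ → G.E :=
  fun i => if h : i < l.length then l.get ⟨i, h⟩ else x (i - l.length)

/-- A cycle: a nonempty finite path with equal range and source. -/
def IsCycle (c : List G.E) : Prop := c ≠ [] ∧ ∃ u, G.IsPath u c u

/-- A finite path contains a cycle if some (contiguous) subpath is a cycle. -/
def ContainsCycle (l : List G.E) : Prop :=
  ∃ p c q, l = p ++ c ++ q ∧ G.IsCycle c

/-- A simple cycle: a cycle containing no other cycle as a proper subpath. -/
def IsSimpleCycle (c : List G.E) : Prop :=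
  G.IsCycle c ∧ ∀ p c' q, c = p ++ c' ++ q → G.IsCycle c' → c' = c

/-- A pair of finite paths is minimal if no nontrivial common final segment
can be factored out. -/
def Minimal (a b : List G.E) : Prop :=
  ∀ a' b' n, a = a' ++ n → b = b' ++ n → n = []

/-- No cycle of `G` has an entrance: for every edge `f` on a cycle, `f` is the
only edge with range `r f`. -/
def NoCycleHasEntrance : Prop :=
  ∀ u c, G.IsCycle c → G.IsPath u c u → ∀ f ∈ c, ∀ e, G.r e = G.r f → e = f

/-- Row-finite: every vertex receives only finitely many edges. -/
def RowFinite : Prop := ∀ v, {e : G.E | G.r e = v}.Finite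

/-- No sources: every vertex receives an edge. -/
def NoSources : Prop := ∀ v : G.V, ∃ e, G.r e = v

/-- Minimal cycle-free ancestry pair for the vertices `v, w`. -/
def MCFPair (v w : G.V) (a b : List G.E) : Prop :=
  (∃ u, G.IsPath v a u ∧ G.IsPath w b u) ∧ G.Minimal a b ∧
    ¬G.ContainsCycle a ∧ ¬G.ContainsCycle b

end DirGraph

/-- The image `π_R(Z(a,b))` in `E^∞ × E^∞` of the cylinder set of an ancestry
pair `(a,b)` for the vertices `v, w`. -/
def DirGraph.PairSet (G : DirGraph) (v w : G.V) (a b : List G.E) :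
    Set ((ℕ → G.E) × (ℕ → G.E)) :=
  {t | ∃ (u : G.V) (z : ℕ → G.E), G.InfPath z ∧ G.r (z 0) = u ∧
    G.IsPath v a u ∧ G.IsPath w b u ∧ t = (G.prepend a z, G.prepend b z)}

namespace DirGraph

variable {G : DirGraph}

lemma get_congr {α : Type} (l : List α) {i j : ℕ} (h : i = j) (hi : i < l.length)
    (hj : j < l.length) : l.get ⟨i, hi⟩ = l.get ⟨j, hj⟩ := by subst h; rfl

lemma path_nil_eq {v u : G.V} (h : G.IsPath v [] u) : v = u := by cases h; rfl

lemma prepend_nil (x : ℕ → G.E) : G.prepend [] x = x := by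
  funext i; simp [DirGraph.prepend]

lemma prepend_cons_zero (e : G.E) (l : List G.E) (x : ℕ → G.E) :
    G.prepend (e :: l) x 0 = e := by
  simp [DirGraph.prepend]

lemma prepend_cons_succ (e : G.E) (l : List G.E) (x : ℕ → G.E) (i : ℕ) :
    G.prepend (e :: l) x (i + 1) = G.prepend l x i := by
  unfold DirGraph.prepend
  by_cases h : i < l.length
  · rw [dif_pos (by simp only [List.length_cons]; omega), dif_pos h]
    simp
  · rw [dif_neg (by simp only [List.length_cons]; omega), dif_neg h]
    congr 1
    simp only [List.length_cons]; omega

lemma prepend_append (l1 l2 : List G.E) (x : ℕ → G.E) :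
    G.prepend (l1 ++ l2) x = G.prepend l1 (G.prepend l2 x) := by
  induction l1 with
  | nil => simp [prepend_nil]
  | cons e l ih =>
    funext i
    cases i with
    | zero => rw [List.cons_append, prepend_cons_zero, prepend_cons_zero]
    | succ j => rw [List.cons_append, prepend_cons_succ, prepend_cons_succ, ih]

lemma r_prepend_zero {v u : G.V} {l : List G.E} (h : G.IsPath v l u) {z : ℕ → G.E}
    (hz : G.r (z 0) = u) : G.r (G.prepend l z 0) = v := by
  cases h with
  | nil => rw [prepend_nil]; exact hz
  | cons e h' => rw [prepend_cons_zero]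

lemma infPath_prepend {v u : G.V} {l : List G.E} (h : G.IsPath v l u) {z : ℕ → G.E}
    (hz : G.r (z 0) = u) (hinf : G.InfPath z) : G.InfPath (G.prepend l z) := by
  induction h with
  | nil => rwa [prepend_nil]
  | cons e h' ih =>
    intro i
    cases i with
    | zero =>
      rw [prepend_cons_zero, prepend_cons_succ]
      exact (r_prepend_zero h' hz).symm
    | succ j =>
      rw [prepend_cons_succ, prepend_cons_succ]
      exact ih hz j

lemma shift_prepend (l : List G.E) (z : ℕ → G.E) :
    shift l.length (G.prepend l z) = z := by
  funext i
  unfold shift DirGraph.prepend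
  rw [dif_neg (by omega)]
  congr 1
  omega

lemma r_head {v u : G.V} {l : List G.E} (h : G.IsPath v l u) (hl : 0 < l.length) :
    G.r (l.get ⟨0, hl⟩) = v := by
  cases h with
  | nil => simp at hl
  | cons e h' => rfl

lemma s_get {v u : G.V} {l : List G.E} (h : G.IsPath v l u) :
    ∀ j (hj1 : j < l.length) (hj : j + 1 < l.length),
      G.s (l.get ⟨j, hj1⟩) = G.r (l.get ⟨j + 1, hj⟩) := by
  induction h with
  | nil => intro j hj1 hj; simp at hj1
  | cons e h' ih =>
    rename_i l' u'
    intro j hj1 hj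
    cases j with
    | zero =>
      have h0 : 0 < l'.length := by simp only [List.length_cons] at hj; omega
      simpa using (r_head h' h0).symm
    | succ k =>
      have hk1 : k < l'.length := by simp only [List.length_cons] at hj1; omega
      have hk2 : k + 1 < l'.length := by simp only [List.length_cons] at hj; omega
      simpa using ih k hk1 hk2

lemma s_last {v u : G.V} {l : List G.E} (h : G.IsPath v l u) (hl : 0 < l.length) :
    G.s (l.get ⟨l.length - 1, by omega⟩) = u := by
  induction h with
  | nil => simp at hl
  | cons e h' ih =>
    rename_i l' u'
    by_cases h0 : l' = []
    · subst h0
      simpa using path_nil_eq h'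
    · have hl' : 0 < l'.length := List.length_pos_iff.mpr h0
      have h2 := ih hl'
      have key : (e :: l').get ⟨(e :: l').length - 1, by omega⟩ =
          l'.get ⟨l'.length - 1, by omega⟩ := by
        have h3 : (e :: l').length - 1 = (l'.length - 1) + 1 := by
          simp only [List.length_cons]; omega
        simp only [List.get_eq_getElem]
        simp_rw [h3]
        rw [List.getElem_cons_succ]
      rw [key, h2]

lemma force (hnc : G.NoCycleHasEntrance) {c : List G.E} {u' : G.V} (hcne : c ≠ [])
    (hp : G.IsPath u' c u') {t : ℕ → G.E} (ht : G.InfPath t) (h0 : G.r (t 0) = u') :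
    ∀ i, t i = c.get ⟨i % c.length, Nat.mod_lt _ (List.length_pos_iff.mpr hcne)⟩ := by
  have hn : 0 < c.length := List.length_pos_iff.mpr hcne
  have hcyc : G.IsCycle c := ⟨hcne, u', hp⟩
  intro i
  induction i with
  | zero =>
    refine hnc u' c hcyc hp _ (List.get_mem c _) _ ?_
    rw [h0, ← r_head hp hn]
    exact congrArg G.r (get_congr c (Nat.zero_mod _).symm _ _)
  | succ k ih =>
    have hmlt : k % c.length < c.length := Nat.mod_lt _ hn
    refine hnc u' c hcyc hp _ (List.get_mem c _) _ ?_
    have h1 : G.r (t (k + 1)) = G.s (c.get ⟨k % c.length, hmlt⟩) := by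
      rw [← ih]; exact (ht k).symm
    rw [h1]
    have hdm : c.length * (k / c.length) + k % c.length = k := Nat.div_add_mod k c.length
    by_cases hcase : k % c.length + 1 < c.length
    · have hmod : (k + 1) % c.length = k % c.length + 1 := by
        conv_lhs => rw [show k + 1 = (k % c.length + 1) + c.length * (k / c.length) by omega,
          Nat.add_mul_mod_self_left]
        exact Nat.mod_eq_of_lt hcase
      rw [s_get hp (k % c.length) hmlt hcase]
      exact congrArg G.r (get_congr c hmod.symm _ _)
    · have hmod : (k + 1) % c.length = 0 := by
        conv_lhs => rw [show k + 1 = c.length + c.length * (k / c.length) by omega,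
          Nat.add_mul_mod_self_left]
        exact Nat.mod_self _
      have e1 : c.get ⟨k % c.length, hmlt⟩ = c.get ⟨c.length - 1, by omega⟩ :=
        get_congr c (by omega) _ _
      rw [e1, s_last hp hn, ← r_head hp hn]
      exact congrArg G.r (get_congr c (by omega) _ _)

lemma prepend_cycle (hnc : G.NoCycleHasEntrance) {c : List G.E} {u' : G.V} (hcne : c ≠ [])
    (hp : G.IsPath u' c u') {t : ℕ → G.E} (ht : G.InfPath t) (h0 : G.r (t 0) = u') :
    G.prepend c t = t := by
  have hn : 0 < c.length := List.length_pos_iff.mpr hcne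
  funext i
  unfold DirGraph.prepend
  split
  · next h =>
    rw [force hnc hcne hp ht h0 i]
    exact (get_congr c (Nat.mod_eq_of_lt h) _ _).symm
  · next h =>
    rw [force hnc hcne hp ht h0 (i - c.length), force hnc hcne hp ht h0 i]
    refine get_congr c ?_ _ _
    conv_rhs => rw [show i = (i - c.length) + c.length by omega, Nat.add_mod_right]

lemma isPath_append {v u : G.V} {l1 l2 : List G.E} :
    G.IsPath v (l1 ++ l2) u ↔ ∃ m, G.IsPath v l1 m ∧ G.IsPath m l2 u := by
  induction l1 generalizing v with
  | nil =>
    simp only [List.nil_append]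
    constructor
    · intro h; exact ⟨v, .nil v, h⟩
    · rintro ⟨m, hm, h⟩; cases hm; exact h
  | cons e l ih =>
    constructor
    · intro h
      cases h with
      | cons e h' =>
        obtain ⟨m, h1, h2⟩ := ih.mp h'
        exact ⟨m, .cons e h1, h2⟩
    · rintro ⟨m, h1, h2⟩
      cases h1 with
      | cons e h1' => exact .cons e (ih.mpr ⟨m, h1', h2⟩)

lemma infPath_shift {x : ℕ → G.E} (hx : G.InfPath x) (p : ℕ) : G.InfPath (shift p x) := by
  intro i
  show G.s (x (i + p)) = G.r (x (i + 1 + p))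
  rw [Nat.add_right_comm]
  exact hx (i + p)

lemma isPath_ofFn {x : ℕ → G.E} (hx : G.InfPath x) :
    ∀ p, G.IsPath (G.r (x 0)) (List.ofFn fun i : Fin p => x i) (G.r (x p)) := by
  intro p
  induction p generalizing x with
  | zero => simpa using IsPath.nil _
  | succ n ih =>
    have htail := ih (infPath_shift hx 1)
    have h0 : G.r (shift 1 x 0) = G.s (x 0) := (hx 0).symm
    rw [h0] at htail
    have hc := IsPath.cons (G := G) (x 0) htail
    rw [List.ofFn_succ]
    convert hc using 2
    all_goals simp [shift, Fin.val_succ]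

lemma prepend_ofFn (x : ℕ → G.E) (p : ℕ) :
    G.prepend (List.ofFn fun i : Fin p => x i) (shift p x) = x := by
  funext i
  unfold DirGraph.prepend shift
  simp only [List.length_ofFn]
  split
  · next h => simp [List.get_ofFn]
  · next h => congr 1; omega

lemma main_lemma (hnc : G.NoCycleHasEntrance) (v w : G.V) :
    ∀ N (a b : List G.E) (u : G.V) (z : ℕ → G.E),
      a.length + b.length ≤ N → G.IsPath v a u → G.IsPath w b u →
      G.InfPath z → G.r (z 0) = u →
      ∃ a' b', G.MCFPair v w a' b' ∧
        (G.prepend a z, G.prepend b z) ∈ G.PairSet v w a' b' := by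
  intro N
  induction N with
  | zero =>
    intro a b u z hlen ha hb hz hz0
    have ha0 : a = [] := List.length_eq_zero_iff.mp (by omega)
    have hb0 : b = [] := List.length_eq_zero_iff.mp (by omega)
    subst ha0 hb0
    have hu1 : v = u := path_nil_eq ha
    subst hu1
    have hu2 : w = v := path_nil_eq hb
    refine ⟨[], [], ⟨⟨v, .nil v, hb⟩, ?_, ?_, ?_⟩, ⟨v, z, hz, hz0, .nil v, hb, rfl⟩⟩
    · intro a' b' n h1 _
      exact (List.append_eq_nil_iff.mp h1.symm).2
    · rintro ⟨p, c, q, heq, hc⟩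
      exact hc.1 (List.append_eq_nil_iff.mp (List.append_eq_nil_iff.mp heq.symm).1).2
    · rintro ⟨p, c, q, heq, hc⟩
      exact hc.1 (List.append_eq_nil_iff.mp (List.append_eq_nil_iff.mp heq.symm).1).2
  | succ N ih =>
    intro a b u z hlen ha hb hz hz0
    by_cases hca : G.ContainsCycle a
    · obtain ⟨p, c, q, heq, hcne, u', hcp⟩ := hca
      rw [List.append_assoc] at heq
      subst heq
      obtain ⟨m, hp1, hrest⟩ := isPath_append.mp ha
      obtain ⟨m2, hc1, hq1⟩ := isPath_append.mp hrest
      have hn : 0 < c.length := List.length_pos_iff.mpr hcne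
      have hm : m = u' := by rw [← r_head hc1 hn, r_head hcp hn]
      have hm2 : m2 = u' := by rw [← s_last hc1 hn, s_last hcp hn]
      rw [hm] at hp1
      rw [hm2] at hq1
      have htinf : G.InfPath (G.prepend q z) := infPath_prepend hq1 hz0 hz
      have ht0 : G.r (G.prepend q z 0) = u' := r_prepend_zero hq1 hz0
      have hforce : G.prepend c (G.prepend q z) = G.prepend q z :=
        prepend_cycle hnc hcne hcp htinf ht0
      have hx : G.prepend (p ++ (c ++ q)) z = G.prepend (p ++ q) z := by
        rw [prepend_append, prepend_append, prepend_append, hforce]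
      have hpath' : G.IsPath v (p ++ q) u := isPath_append.mpr ⟨u', hp1, hq1⟩
      have hlen' : (p ++ q).length + b.length ≤ N := by
        simp only [List.length_append] at hlen ⊢; omega
      obtain ⟨a', b', hmcf, hmem⟩ := ih (p ++ q) b u z hlen' hpath' hb hz hz0
      exact ⟨a', b', hmcf, by rw [hx]; exact hmem⟩
    · by_cases hcb : G.ContainsCycle b
      · obtain ⟨p, c, q, heq, hcne, u', hcp⟩ := hcb
        rw [List.append_assoc] at heq
        subst heq
        obtain ⟨m, hp1, hrest⟩ := isPath_append.mp hb
        obtain ⟨m2, hc1, hq1⟩ := isPath_append.mp hrest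
        have hn : 0 < c.length := List.length_pos_iff.mpr hcne
        have hm : m = u' := by rw [← r_head hc1 hn, r_head hcp hn]
        have hm2 : m2 = u' := by rw [← s_last hc1 hn, s_last hcp hn]
        rw [hm] at hp1
        rw [hm2] at hq1
        have htinf : G.InfPath (G.prepend q z) := infPath_prepend hq1 hz0 hz
        have ht0 : G.r (G.prepend q z 0) = u' := r_prepend_zero hq1 hz0
        have hforce : G.prepend c (G.prepend q z) = G.prepend q z :=
          prepend_cycle hnc hcne hcp htinf ht0
        have hx : G.prepend (p ++ (c ++ q)) z = G.prepend (p ++ q) z := by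
          rw [prepend_append, prepend_append, prepend_append, hforce]
        have hpath' : G.IsPath w (p ++ q) u := isPath_append.mpr ⟨u', hp1, hq1⟩
        have hlen' : a.length + (p ++ q).length ≤ N := by
          simp only [List.length_append] at hlen ⊢; omega
        obtain ⟨a', b', hmcf, hmem⟩ := ih a (p ++ q) u z hlen' ha hpath' hz hz0
        exact ⟨a', b', hmcf, by rw [hx]; exact hmem⟩
      · by_cases hmin : G.Minimal a b
        · exact ⟨a, b, ⟨⟨u, ha, hb⟩, hmin, hca, hcb⟩, ⟨u, z, hz, hz0, ha, hb, rfl⟩⟩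
        · unfold DirGraph.Minimal at hmin
          push_neg at hmin
          obtain ⟨a', b', n, hae, hbe, hne⟩ := hmin
          subst hae hbe
          have hnn : 0 < n.length := List.length_pos_iff.mpr hne
          obtain ⟨m, ha1, hn1⟩ := isPath_append.mp ha
          obtain ⟨m2, hb1, hn2⟩ := isPath_append.mp hb
          have hm : m2 = m := by rw [← r_head hn2 hnn, r_head hn1 hnn]
          subst hm
          have hz' : G.InfPath (G.prepend n z) := infPath_prepend hn1 hz0 hz
          have hz0' : G.r (G.prepend n z 0) = m2 := r_prepend_zero hn1 hz0
          have hlen' : a'.length + b'.length ≤ N := by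
            simp only [List.length_append] at hlen; omega
          obtain ⟨a'', b'', hmcf, hmem⟩ := ih a' b' m2 (G.prepend n z) hlen' ha1 hb1 hz' hz0'
          refine ⟨a'', b'', hmcf, ?_⟩
          rw [prepend_append, prepend_append]
          exact hmem

end DirGraph

/-- If no cycle has an entrance and every pair of vertices has only
finitely many cycle-free minimal ancestry pairs, then for all vertices `v, w`,
the set of pairs of shift-equivalent infinite paths with ranges `v, w` is a
finite union of sets `π_R(Z(λ,μ))` over cycle-free minimal ancestry pairs. -/
theorem orbit_set_finite_union (G : DirGraph)
    (hrf : G.RowFinite) (hns : G.NoSources) (hnc : G.NoCycleHasEntrance)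
    (hfa : ∀ v w : G.V, {p : List G.E × List G.E | G.MCFPair v w p.1 p.2}.Finite)
    (v w : G.V) :
    ∃ D : Set (List G.E × List G.E), D.Finite ∧
      (∀ p ∈ D, G.MCFPair v w p.1 p.2) ∧
      {t : (ℕ → G.E) × (ℕ → G.E) | G.InfPath t.1 ∧ G.InfPath t.2 ∧
          G.r (t.1 0) = v ∧ G.r (t.2 0) = w ∧
          ∃ p q : ℕ, shift p t.1 = shift q t.2} =
        ⋃ p ∈ D, G.PairSet v w p.1 p.2 := by
  refine ⟨{p | G.MCFPair v w p.1 p.2}, hfa v w, fun p hp => hp, ?_⟩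
  ext ⟨x, y⟩
  simp only [Set.mem_setOf_eq, Set.mem_iUnion]
  constructor
  · rintro ⟨hx, hy, hrx, hry, p, q, hsh⟩
    have hzx : x = G.prepend (List.ofFn fun i : Fin p => x i) (shift p x) :=
      (DirGraph.prepend_ofFn x p).symm
    have hzy : y = G.prepend (List.ofFn fun i : Fin q => y i) (shift q y) :=
      (DirGraph.prepend_ofFn y q).symm
    rw [← hsh] at hzy
    have hpx := DirGraph.isPath_ofFn hx p
    have hpy := DirGraph.isPath_ofFn hy q
    rw [hrx] at hpx
    rw [hry] at hpy
    have hu : G.r (y q) = G.r (x p) := by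
      have h1 : y q = shift q y 0 := by show y q = y (0 + q); rw [Nat.zero_add]
      have h2 : x p = shift p x 0 := by show x p = x (0 + p); rw [Nat.zero_add]
      rw [h1, ← hsh, ← h2]
    rw [hu] at hpy
    have hzinf : G.InfPath (shift p x) := DirGraph.infPath_shift hx p
    have hz0 : G.r (shift p x 0) = G.r (x p) := by
      show G.r (x (0 + p)) = G.r (x p); rw [Nat.zero_add]
    obtain ⟨a', b', hmcf, hmem⟩ := DirGraph.main_lemma hnc v w
      ((List.ofFn fun i : Fin p => x i).length + (List.ofFn fun i : Fin q => y i).length)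
      (List.ofFn fun i : Fin p => x i) (List.ofFn fun i : Fin q => y i)
      (G.r (x p)) (shift p x) le_rfl hpx hpy hzinf hz0
    refine ⟨(a', b'), hmcf, ?_⟩
    rw [hzx, hzy]
    exact hmem
  · rintro ⟨⟨a, b⟩, hab, hmem⟩
    obtain ⟨u, z, hz, hz0, hpa, hpb, heq⟩ := hmem
    have hx : x = G.prepend a z := congrArg Prod.fst heq
    have hy : y = G.prepend b z := congrArg Prod.snd heq
    subst hx hy
    exact ⟨DirGraph.infPath_prepend hpa hz0 hz, DirGraph.infPath_prepend hpb hz0 hz,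
      DirGraph.r_prepend_zero hpa hz0, DirGraph.r_prepend_zero hpb hz0,
      a.length, b.length, by rw [DirGraph.shift_prepend, DirGraph.shift_prepend]⟩
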